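/- arXiv:1708.04760 — 4 statements merged into one kernel-verified Lean document; each statement's English description precedes it below -/
import Mathlib

section
/- Let R be a commutative ring with an action of a finite group G by ring automorphisms, with |G| invertible in R. Let Q be a G-invariant ideal of R and y₁, …, y_s elements of R^G. Then (Q + (y₁,…,y_s)R) ∩ R^G = (Q ∩ R^G) + (y₁,…,y_s)R^G. -/
/-- Let `R` be a commutative ring with an action of a finite group `G` by ring
automorphisms, with `|G|` invertible in `R`. Let `Q` be a `G`-invariant ideal of `R` and
`y₁, …, y_s` elements of the invariant subring `R^G`. Then
`(Q + (y₁,…,y_s)R) ∩ R^G = (Q ∩ R^G) + (y₁,…,y_s)R^G`, where the intersection with `R^G`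
is the preimage under the inclusion of the invariant subring. -/
theorem stmt_7 {R : Type*} [CommRing R] {G : Type*} [Group G] [Fintype G]
    [MulSemiringAction G R] (u : R) (hu : (Fintype.card G : R) * u = 1)
    (B : Subring R) (hB : ∀ r : R, r ∈ B ↔ ∀ σ : G, σ • r = r)
    (Q : Ideal R) (hQ : ∀ σ : G, ∀ x ∈ Q, σ • x ∈ Q)
    (s : ℕ) (y : Fin s → R) (hy : ∀ i, y i ∈ B) :
    Ideal.comap B.subtype (Q + Ideal.span (Set.range y)) =
      Ideal.comap B.subtype Q +
        Ideal.span (Set.range fun i => (⟨y i, hy i⟩ : B)) := by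
  -- the Reynolds operator
  set ρ : R → R := fun r => u * ∑ σ : G, σ • r with hρ
  have huinv : ∀ τ : G, τ • u = u := by
    intro τ
    have hc : τ • ((Fintype.card G : R)) = (Fintype.card G : R) :=
      map_natCast (MulSemiringAction.toRingHom G R τ) _
    have h1 : (Fintype.card G : R) * (τ • u) = 1 := by
      have := congrArg (fun r => τ • r) hu
      simpa [smul_mul', hc] using this
    calc τ • u = ((Fintype.card G : R) * u) * (τ • u) := by rw [hu, one_mul]
    _ = ((Fintype.card G : R) * (τ • u)) * u := by ring
    _ = u := by rw [h1, one_mul]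
  have hρB : ∀ r : R, ρ r ∈ B := by
    intro r
    rw [hB]
    intro τ
    rw [hρ]
    simp only [smul_mul', huinv τ, Finset.smul_sum]
    congr 1
    apply Fintype.sum_equiv (Equiv.mulLeft τ)
    intro σ
    simp [mul_smul]
  have hρQ : ∀ q ∈ Q, ρ q ∈ Q := by
    intro q hq
    exact Ideal.mul_mem_left _ _ (Ideal.sum_mem _ fun σ _ => hQ σ q hq)
  have hρfix : ∀ b ∈ B, ρ b = b := by
    intro b hb
    have : ∀ σ : G, σ • b = b := (hB b).mp hb
    calc ρ b = u * ((Fintype.card G : R) * b) := by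
          rw [hρ]; simp [this, Finset.sum_const, nsmul_eq_mul, Finset.card_univ]
    _ = ((Fintype.card G : R) * u) * b := by ring
    _ = b := by rw [hu, one_mul]
  have hρmul : ∀ (x b : R), b ∈ B → ρ (x * b) = ρ x * b := by
    intro x b hb
    have hbfix : ∀ σ : G, σ • b = b := (hB b).mp hb
    rw [hρ]
    simp only [smul_mul', hbfix, ← Finset.sum_mul]
    ring
  have hρadd : ∀ x z : R, ρ (x + z) = ρ x + ρ z := by
    intro x z
    rw [hρ]
    simp [smul_add, Finset.sum_add_distrib, mul_add]
  apply le_antisymm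
  · rintro ⟨x, hxB⟩ hx
    rw [Ideal.mem_comap] at hx
    rw [Ideal.add_eq_sup, Submodule.mem_sup] at hx
    obtain ⟨q, hq, z, hz, hqz⟩ := hx
    rw [Ideal.span, Submodule.mem_span_range_iff_exists_fun] at hz
    obtain ⟨c, hc⟩ := hz
    have hx_eq : x = ρ q + ∑ i, ρ (c i) * y i := by
      have h1 : x = ρ x := (hρfix x hxB).symm
      rw [h1]
      have hzx : q + z = x := hqz
      have h2 : x = q + ∑ i, c i * y i := by
        rw [← hzx, ← hc]; simp [smul_eq_mul]
      conv_lhs => rw [h2]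
      rw [hρadd]
      congr 1
      have : ρ (∑ i, c i * y i) = ∑ i, ρ (c i * y i) := by
        simp only [hρ, Finset.smul_sum]
        rw [Finset.sum_comm, Finset.mul_sum]
      rw [this]
      exact Finset.sum_congr rfl fun i _ => hρmul (c i) (y i) (hy i)
    have key : (⟨x, hxB⟩ : B) =
        ⟨ρ q, hρB q⟩ + ∑ i, (⟨ρ (c i), hρB (c i)⟩ : B) * ⟨y i, hy i⟩ := by
      apply Subtype.ext
      push_cast
      exact hx_eq
    rw [key]
    apply Submodule.add_mem_sup
    · rw [Ideal.mem_comap]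
      exact hρQ q hq
    · exact Ideal.sum_mem _ fun i _ =>
        Ideal.mul_mem_left _ _ (Ideal.subset_span ⟨i, rfl⟩)
  · rw [Ideal.add_eq_sup, sup_le_iff]
    constructor
    · exact Ideal.comap_mono le_sup_left
    · rw [Ideal.span_le]
      rintro _ ⟨i, rfl⟩
      rw [SetLike.mem_coe, Ideal.mem_comap]
      exact Submodule.mem_sup_right (Ideal.subset_span ⟨i, rfl⟩)
end

section
/- With R a commutative ring and G a finite group acting by ring automorphisms, the map ψ : R → (R*G)^G defined by ψ(r) = Σ_{σ ∈ G} σ(r)σ is a bijection which is left R^G-linear (ψ(ar) = aψ(r) for a ∈ R^G) and right R-linear for the right R-module structure (Σ σ(r)σ)·s = Σ σ(rs)σ. -/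
/-- The natural `G`-action on the skew group ring `R*G`, on coefficient functions. -/
def skewGroupRingAct {R : Type*} {G : Type*} [CommRing R] [Group G]
    [MulSemiringAction G R] (τ : G) (a : G → R) : G → R :=
  fun σ => τ • a (τ⁻¹ * σ)

/-- The map `ψ : R → (R*G)^G`, `ψ(r) = Σ_{σ ∈ G} σ(r)σ`, is a bijection onto the
`G`-invariants of the skew group ring, is left `R^G`-linear (`ψ(ar) = aψ(r)` for
invariant `a`, coefficientwise), and is right `R`-linear for the right `R`-module
structure `(Σ σ(r)σ)·s = Σ σ(rs)σ` (coefficientwise `u·s` has coefficients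
`u_σ · σ(s)`). -/
theorem stmt_10 {R : Type*} {G : Type*} [CommRing R] [Group G]
    [Finite G] [MulSemiringAction G R] :
    ∀ ψ : R → (G → R), (∀ (r : R) (σ : G), ψ r σ = σ • r) →
      (∀ (r : R) (τ : G), skewGroupRingAct τ (ψ r) = ψ r) ∧
      Function.Injective ψ ∧
      (∀ a : G → R, (∀ τ : G, skewGroupRingAct τ a = a) → ∃ r : R, a = ψ r) ∧
      (∀ a r : R, (∀ σ : G, σ • a = a) → ψ (a * r) = fun σ => a * ψ r σ) ∧
      (∀ r s : R, ψ (r * s) = fun σ => ψ r σ * σ • s) := by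
  intro ψ hψ
  refine ⟨fun r τ => ?_, fun r s h => ?_, fun a ha => ?_, fun a r ha => ?_, fun r s => ?_⟩
  · funext σ
    simp [skewGroupRingAct, hψ, smul_smul, mul_inv_cancel_left]
  · have := congrFun h 1
    simpa [hψ] using this
  · refine ⟨a 1, ?_⟩
    funext σ
    have := congrFun (ha σ) σ
    simp only [skewGroupRingAct, inv_mul_cancel] at this
    rw [← this, hψ]
  · funext σ
    simp [hψ, smul_mul', ha]
  · funext σ
    simp [hψ, smul_mul']
end

section
/- Let R be an Artinian local ring with maximal ideal 𝔫 and residue field k, with a finite group G acting by local ring automorphisms inducing the identity on k, with |G|⁻¹ ∈ R. Let W be a cyclic R-module with a compatible G-action (an R*G-module with W ≅ R/Q as R-modules). If every group homomorphism G → kˣ is trivial, then W has a G-invariant generator; consequently W ≅ R/Q' as R*G-modules for some G-invariant ideal Q'. -/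
theorem aux_final {R : Type*} [CommRing R] {G : Type*} [Group G] [MulSemiringAction G R]
    {W : Type*} [AddCommGroup W] [Module R W] [DistribMulAction G W]
    (hcomp : ∀ (σ : G) (a : R) (w : W), σ • (a • w) = (σ • a) • (σ • w))
    (u : W) (hinv : ∀ σ : G, σ • u = u) (hg : ∀ w : W, ∃ a : R, w = a • u) :
    (∀ σ : G, σ • u = u) ∧ (∀ w : W, ∃ a : R, w = a • u) ∧
      ∃ Q' : Ideal R, (∀ σ : G, ∀ x ∈ Q', σ • x ∈ Q') ∧
        ∃ e : (R ⧸ Q') ≃ₗ[R] W,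
          ∀ (σ : G) (a : R),
            e (Ideal.Quotient.mk Q' (σ • a)) = σ • e (Ideal.Quotient.mk Q' a) := by
  refine ⟨hinv, hg, ?_⟩
  set f := LinearMap.toSpanSingleton R W u with hf
  refine ⟨LinearMap.ker f, ?_, ?_⟩
  · intro σ x hx
    have hx' : x • u = 0 := hx
    show (σ • x) • u = 0
    rw [← hinv σ, ← hcomp, hx', smul_zero]
  · have hmk : ∀ a : R, (LinearMap.ker f).liftQ f le_rfl (Ideal.Quotient.mk _ a) = a • u :=
      fun a => rfl
    refine ⟨LinearEquiv.ofBijective ((LinearMap.ker f).liftQ f le_rfl) ⟨?_, ?_⟩, ?_⟩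
    · rw [← LinearMap.ker_eq_bot, Submodule.ker_liftQ_eq_bot]; exact le_rfl
    · intro w
      obtain ⟨a, ha⟩ := hg w
      exact ⟨Submodule.Quotient.mk a, ha.symm⟩
    · intro σ a
      show (LinearMap.ker f).liftQ f le_rfl (Ideal.Quotient.mk _ (σ • a)) =
        σ • (LinearMap.ker f).liftQ f le_rfl (Ideal.Quotient.mk _ a)
      rw [hmk, hmk, hcomp, hinv]

open IsLocalRing

section main
variable {R : Type*} [CommRing R] [IsLocalRing R]
    {G : Type*} [Group G] [Fintype G] [MulSemiringAction G R]
    {W : Type*} [AddCommGroup W] [Module R W] [DistribMulAction G W]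

theorem key_gen
    (hres : ∀ (σ : G) (r : R), σ • r - r ∈ maximalIdeal R)
    (hcard : IsUnit ((Fintype.card G : R)))
    (hcomp : ∀ (σ : G) (a : R) (w : W), σ • (a • w) = (σ • a) • (σ • w))
    (w₀ : W) (hgen : ∀ w : W, ∃ a : R, w = a • w₀)
    (htriv : ∀ χ : G →* (ResidueField R)ˣ, ∀ g : G, χ g = 1) :
    ∃ u : W, (∀ σ : G, σ • u = u) ∧ (∀ w : W, ∃ a : R, w = a • u) := by
  classical
  by_cases h0 : w₀ = 0
  · exact ⟨w₀, fun σ => by rw [h0, smul_zero], hgen⟩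
  set 𝔪 := maximalIdeal R with h𝔪
  have hone : (1 : R) ∉ 𝔪 := by
    intro h
    exact (IsLocalRing.maximalIdeal.isMaximal R).ne_top ((Ideal.eq_top_iff_one _).mpr h)
  -- annihilator of w₀ is contained in 𝔪
  have hQ : ∀ x : R, x • w₀ = 0 → x ∈ 𝔪 := by
    intro x hx
    by_contra hxm
    have hux : IsUnit x := by
      rwa [h𝔪, IsLocalRing.mem_maximalIdeal, mem_nonunits_iff, not_not] at hxm
    apply h0
    calc w₀ = (1 : R) • w₀ := (one_smul R w₀).symm
      _ = (↑hux.unit⁻¹ * x) • w₀ := by rw [IsUnit.val_inv_mul]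
      _ = 0 := by rw [mul_smul, hx, smul_zero]
  set a : G → R := fun σ => (hgen (σ • w₀)).choose with ha_def
  have ha : ∀ σ : G, σ • w₀ = a σ • w₀ := fun σ => (hgen (σ • w₀)).choose_spec
  have hmem : ∀ σ : G, a σ ∈ 𝔪 → False := by
    intro σ hσ
    have h1 : w₀ = ((σ⁻¹ • a σ) * a σ⁻¹) • w₀ := by
      calc w₀ = σ⁻¹ • σ • w₀ := by rw [inv_smul_smul]
        _ = σ⁻¹ • (a σ • w₀) := by rw [← ha σ]
        _ = (σ⁻¹ • a σ) • (σ⁻¹ • w₀) := hcomp σ⁻¹ (a σ) w₀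
        _ = (σ⁻¹ • a σ) • (a σ⁻¹ • w₀) := by rw [← ha σ⁻¹]
        _ = ((σ⁻¹ • a σ) * a σ⁻¹) • w₀ := by rw [mul_smul]
    have h2 : (1 - (σ⁻¹ • a σ) * a σ⁻¹) • w₀ = 0 := by
      rw [sub_smul, one_smul, ← h1, sub_self]
    have h3 : (1 : R) - (σ⁻¹ • a σ) * a σ⁻¹ ∈ 𝔪 := hQ _ h2
    have h4 : σ⁻¹ • a σ ∈ 𝔪 := by
      have := hres σ⁻¹ (a σ)
      have : σ⁻¹ • a σ = (σ⁻¹ • a σ - a σ) + a σ := by ring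
      rw [this]
      exact Ideal.add_mem _ (hres σ⁻¹ (a σ)) hσ
    have h5 : (σ⁻¹ • a σ) * a σ⁻¹ ∈ 𝔪 := Ideal.mul_mem_right _ _ h4
    have : (1 : R) ∈ 𝔪 := by
      have : (1 : R) = (1 - (σ⁻¹ • a σ) * a σ⁻¹) + (σ⁻¹ • a σ) * a σ⁻¹ := by ring
      rw [this]; exact Ideal.add_mem _ h3 h5
    exact hone this
  set ρ := IsLocalRing.residue R with hρ
  have hρeq : ∀ x y : R, x - y ∈ 𝔪 → ρ x = ρ y := by
    intro x y h
    rw [← sub_eq_zero, ← map_sub, residue_eq_zero_iff]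
    exact h
  have hunit : ∀ σ : G, IsUnit (ρ (a σ)) := by
    intro σ
    rw [isUnit_iff_ne_zero, Ne, residue_eq_zero_iff]
    exact fun h => hmem σ h
  -- the character
  have hmul : ∀ σ τ : G, a (σ * τ) - (σ • a τ) * a σ ∈ 𝔪 := by
    intro σ τ
    apply hQ
    rw [sub_smul, sub_eq_zero, ← ha (σ * τ)]
    calc (σ * τ) • w₀ = σ • τ • w₀ := mul_smul σ τ w₀
      _ = σ • (a τ • w₀) := by rw [← ha τ]
      _ = (σ • a τ) • (σ • w₀) := hcomp σ (a τ) w₀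
      _ = (σ • a τ) • (a σ • w₀) := by rw [← ha σ]
      _ = (σ • a τ * a σ) • w₀ := (mul_smul _ _ _).symm
  have hχmul : ∀ σ τ : G, ρ (a (σ * τ)) = ρ (a σ) * ρ (a τ) := by
    intro σ τ
    rw [hρeq _ _ (hmul σ τ), map_mul, hρeq (σ • a τ) (a τ) (hres σ (a τ)), mul_comm]
  have hχone : ρ (a 1) = 1 := by
    have : a 1 - 1 ∈ 𝔪 := by
      apply hQ; rw [sub_smul, one_smul, ← ha 1, one_smul, sub_self]
    rw [hρeq _ _ this, map_one]
  set χ : G →* (ResidueField R)ˣ :=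
    { toFun := fun σ => (hunit σ).unit
      map_one' := Units.ext (by rw [IsUnit.unit_spec, hχone, Units.val_one])
      map_mul' := fun σ τ => Units.ext (by
        rw [IsUnit.unit_spec, Units.val_mul, IsUnit.unit_spec, IsUnit.unit_spec, hχmul]) }
    with hχ
  have h1 : ∀ σ : G, a σ - 1 ∈ 𝔪 := by
    intro σ
    have h := htriv χ σ
    have : ρ (a σ) = 1 := by
      have := congrArg Units.val h
      rwa [hχ, MonoidHom.coe_mk, OneHom.coe_mk, IsUnit.unit_spec, Units.val_one] at this
    rw [← residue_eq_zero_iff, map_sub, this, map_one, sub_self]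
  -- averaging
  set n : R := (Fintype.card G : R) with hn
  set r : R := ↑hcard.unit⁻¹ with hr
  have hrn : r * n = 1 := hcard.val_inv_mul
  set S : W := ∑ σ : G, σ • w₀ with hS
  set c : R := r * ∑ σ : G, a σ with hc
  have hSw : S = (∑ σ : G, a σ) • w₀ := by
    rw [hS, Finset.sum_smul]
    exact Finset.sum_congr rfl fun σ _ => ha σ
  set u : W := r • S with hu_def
  have hu : u = c • w₀ := by rw [hu_def, hSw, smul_smul, hc]
  have hsum1 : (∑ σ : G, (1 : R)) = n := by
    rw [Finset.sum_const, nsmul_eq_mul, mul_one, Finset.card_univ, hn]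
  have hc1 : c - 1 ∈ 𝔪 := by
    have : c - 1 = r * (∑ σ : G, (a σ - 1)) := by
      rw [Finset.sum_sub_distrib, hsum1, mul_sub, hrn, hc]
    rw [this]
    exact Ideal.mul_mem_left _ _ (Ideal.sum_mem _ fun σ _ => h1 σ)
  have hcu : IsUnit c := by
    by_contra hnc
    have hcm : c ∈ 𝔪 := by
      rw [h𝔪, IsLocalRing.mem_maximalIdeal]
      exact mem_nonunits_iff.mpr hnc
    apply hone
    have : (1 : R) = c - (c - 1) := by ring
    rw [this]
    exact Ideal.sub_mem _ hcm hc1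
  have hinv : ∀ τ : G, τ • u = u := by
    intro τ
    have hτn : τ • n = n := by
      have h := map_natCast (MulSemiringAction.toRingHom G R τ) (Fintype.card G)
      exact h
    have hτr : τ • r = r := by
      have h1 : (τ • r) * n = 1 := by
        rw [← hτn, ← smul_mul', hrn, smul_one]
      calc τ • r = (τ • r) * (r * n) := by rw [hrn, mul_one]
        _ = r * ((τ • r) * n) := by ring
        _ = r := by rw [h1, mul_one]
    have hτS : τ • S = S := by
      rw [hS, Finset.smul_sum]
      have : ∀ σ : G, τ • (σ • w₀) = (τ * σ) • w₀ := fun σ => smul_smul τ σ w₀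
      calc (∑ σ : G, τ • σ • w₀) = ∑ σ : G, (τ * σ) • w₀ :=
            Finset.sum_congr rfl fun σ _ => this σ
        _ = ∑ σ : G, σ • w₀ :=
            Fintype.sum_equiv (Equiv.mulLeft τ) (fun σ => (τ * σ) • w₀)
              (fun σ => σ • w₀) (fun σ => rfl)
    rw [hu_def, hcomp, hτr, hτS]
  refine ⟨u, hinv, ?_⟩
  intro w
  obtain ⟨b, hb⟩ := hgen w
  refine ⟨b * ↑hcu.unit⁻¹, ?_⟩
  rw [hb, hu, smul_smul, mul_assoc, IsUnit.val_inv_mul, mul_one]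

end main



/-- Let `R` be an Artinian local ring with maximal ideal `𝔫` and residue field `k`, with
a finite group `G` acting by ring automorphisms inducing the identity on `k`, and with
`|G|` invertible in `R`. Let `W` be a cyclic `R`-module with a compatible `G`-action
(an `R*G`-module with `W ≅ R/Q` as `R`-modules, i.e. generated by some `w₀`). If every
group homomorphism `G →* kˣ` is trivial, then `W` has a `G`-invariant generator `u`;
consequently `W ≅ R/Q'` as `R*G`-modules for some `G`-invariant ideal `Q'` (the
isomorphism being `R`-linear and `G`-equivariant for the induced action on `R/Q'`). -/
theorem stmt_16 {R : Type*} [CommRing R] [IsArtinianRing R] [IsLocalRing R]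
    {G : Type*} [Group G] [Fintype G] [MulSemiringAction G R]
    (hres : ∀ (σ : G) (r : R), σ • r - r ∈ IsLocalRing.maximalIdeal R)
    (hcard : IsUnit ((Fintype.card G : R)))
    {W : Type*} [AddCommGroup W] [Module R W] [DistribMulAction G W]
    (hcomp : ∀ (σ : G) (a : R) (w : W), σ • (a • w) = (σ • a) • (σ • w))
    (w₀ : W) (hgen : ∀ w : W, ∃ a : R, w = a • w₀)
    (htriv : ∀ χ : G →* (IsLocalRing.ResidueField R)ˣ, ∀ g : G, χ g = 1) :
    ∃ u : W, (∀ σ : G, σ • u = u) ∧ (∀ w : W, ∃ a : R, w = a • u) ∧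
      ∃ Q' : Ideal R, (∀ σ : G, ∀ x ∈ Q', σ • x ∈ Q') ∧
        ∃ e : (R ⧸ Q') ≃ₗ[R] W,
          ∀ (σ : G) (a : R),
            e (Ideal.Quotient.mk Q' (σ • a)) = σ • e (Ideal.Quotient.mk Q' a) := by
  obtain ⟨u, hinv, hg⟩ := key_gen hres hcard hcomp w₀ hgen htriv
  exact ⟨u, aux_final hcomp u hinv hg⟩
end

section
/- Let B ⊆ S be an extension of commutative Noetherian local rings (with B → S module-finite) such that the inclusion B → S splits as B-modules via a retraction ρ with ρ(1) = 1. If ρ ∈ 𝔫·Hom_B(S, B), where 𝔫 is the maximal ideal of S and 𝔫 = 𝔫^B ⊕ L for a splitting S = B ⊕ L with L ⊆ 𝔫, then L has a free B-summand; equivalently, if the free rank of S as a B-module is 1, then ρ ∉ 𝔫·Hom_B(S, B). -/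
/-- Let `B ⊆ S` be a module-finite extension of commutative Noetherian local rings such
that the inclusion `B → S` splits as `B`-modules via a retraction `ρ` (so `ρ ∘ ι = id`,
in particular `ρ(1) = 1`), giving the splitting `S = B ⊕ L` with `L = ker ρ`. If
`ρ ∈ 𝔫·Hom_B(S, B)` where `𝔫` is the maximal ideal of `S` (i.e. `ρ = Σᵢ aᵢ·φᵢ` with
`aᵢ ∈ 𝔫`, `φᵢ ∈ Hom_B(S, B)` and the `S`-action `(s·φ)(x) = φ(sx)`), then `L` has a free
`B`-summand (equivalently, there is a surjective `B`-linear map `L → B`); equivalently,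
if the free rank of `S` over `B` is `1`, then `ρ ∉ 𝔫·Hom_B(S, B)`. -/
theorem stmt_17 {B S : Type*} [CommRing B] [IsNoetherianRing B] [IsLocalRing B]
    [CommRing S] [IsNoetherianRing S] [IsLocalRing S] [Algebra B S] [Module.Finite B S]
    (hinj : Function.Injective (algebraMap B S))
    (ρ : S →ₗ[B] B) (hret : ∀ b : B, ρ (algebraMap B S b) = b)
    (n : ℕ) (a : Fin n → S) (φ : Fin n → (S →ₗ[B] B))
    (ha : ∀ i, a i ∈ IsLocalRing.maximalIdeal S)
    (hρ : ∀ x : S, ρ x = ∑ i, φ i (a i * x)) :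
    ∃ ψ : (LinearMap.ker ρ) →ₗ[B] B, Function.Surjective ψ := by
  classical
  have hρ1 : ρ 1 = 1 := by simpa using hret 1
  set c : Fin n → B := fun i => ρ (a i) with hc
  set k : Fin n → S := fun i => a i - algebraMap B S (c i) with hk
  have hkker : ∀ i, k i ∈ LinearMap.ker ρ := by
    intro i
    simp [hk, LinearMap.mem_ker, map_sub, hret]
    exact sub_self _
  have halg : ∀ (b : B), algebraMap B S b = b • (1 : S) := by
    intro b; simp [Algebra.smul_def]
  have h1 : (1 : B) = ∑ i, (c i * φ i 1 + φ i (k i)) := by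
    have h := hρ 1
    rw [hρ1] at h
    rw [h]
    refine Finset.sum_congr rfl fun i _ => ?_
    have : a i * 1 = algebraMap B S (c i) + k i := by
      simp [hk]
    rw [this, map_add, halg (c i), map_smul, smul_eq_mul]
  -- some summand is a unit
  have hex : ∃ i, IsUnit (c i * φ i 1 + φ i (k i)) := by
    by_contra hno
    push_neg at hno
    have hmem : (1 : B) ∈ IsLocalRing.maximalIdeal B := by
      rw [h1]
      exact Ideal.sum_mem _ fun i _ => hno i
    exact (IsLocalRing.maximalIdeal B).ne_top_iff_one.mp
      (Ideal.IsMaximal.ne_top inferInstance) hmem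
  obtain ⟨i, hiu⟩ := hex
  have hcase : IsUnit (c i * φ i 1) ∨ IsUnit (φ i (k i)) := by
    by_contra hno
    push_neg at hno
    have hmem : c i * φ i 1 + φ i (k i) ∈ IsLocalRing.maximalIdeal B :=
      Ideal.add_mem _ hno.1 hno.2
    exact hmem hiu
  rcases hcase with hcu | hku
  · -- c i is a unit, so k i = a i - algebraMap (c i) is a unit of S
    have hci : IsUnit (c i) := isUnit_of_mul_isUnit_left hcu
    have hks : IsUnit (k i) := by
      rw [hk]
      by_contra hnk
      have hmem : a i - algebraMap B S (c i) ∈ IsLocalRing.maximalIdeal S :=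
        hnk
      have : algebraMap B S (c i) ∈ IsLocalRing.maximalIdeal S := by
        have := Ideal.sub_mem _ (ha i) hmem
        simpa using this
      exact this (IsUnit.map (algebraMap B S) hci)
    obtain ⟨v, hv⟩ := hks
    refine ⟨ρ ∘ₗ (LinearMap.mulRight B ((↑v⁻¹ : S))) ∘ₗ (LinearMap.ker ρ).subtype,
      fun b => ?_⟩
    refine ⟨⟨b • k i, ?_⟩, ?_⟩
    · exact Submodule.smul_mem _ _ (hkker i)
    · simp only [LinearMap.comp_apply, Submodule.subtype_apply,
        LinearMap.mulRight_apply]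
      rw [smul_mul_assoc, ← hv, Units.mul_inv, map_smul, hρ1, smul_eq_mul, mul_one]
  · -- φ i (k i) is a unit
    obtain ⟨u, hu⟩ := hku
    refine ⟨(φ i) ∘ₗ (LinearMap.ker ρ).subtype, fun b => ?_⟩
    refine ⟨⟨(b * ↑u⁻¹) • k i, Submodule.smul_mem _ _ (hkker i)⟩, ?_⟩
    simp only [LinearMap.comp_apply, Submodule.subtype_apply, map_smul, smul_eq_mul]
    rw [← hu, mul_assoc, Units.inv_mul, mul_one]
end
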